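/- For complex s with Re(s) > 1 and real a with 0 < a ≤ 1, the Hurwitz zeta function satisfies ζ(1−s, a) = (2Γ(s)/(2π)^s) · Σ_{n=1}^∞ cos(πs/2 − 2nπa)/n^s. -/

import Mathlib

open HurwitzZeta Real Filter

theorem hurwitz_formula (s : ℂ) (hs : 1 < s.re) (a : ℝ) (ha : 0 < a) (ha' : a ≤ 1) :
    hurwitzZeta (a : UnitAddCircle) (1 - s) =
      2 * Complex.Gamma s / ((2 * π : ℝ) : ℂ) ^ s *
        ∑' n : ℕ+, Complex.cos (π * s / 2 - 2 * n * π * a) / (n : ℂ) ^ s := by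
  have hs0 : s ≠ 0 := fun h => by rw [h] at hs; norm_num at hs
  have h1 : ∀ n : ℕ, s ≠ -n := by
    intro n h
    rw [h, Complex.neg_re, Complex.natCast_re] at hs
    have : (0:ℝ) ≤ n := Nat.cast_nonneg n
    linarith
  have h2 : s ≠ 1 := fun h => by rw [h] at hs; norm_num at hs
  rw [hurwitzZeta_one_sub _ h1 (Or.inr h2)]
  -- sum over ℕ
  set E : ℂ := Complex.exp (-(π : ℂ) * Complex.I * s / 2)
  set F : ℂ := Complex.exp ((π : ℂ) * Complex.I * s / 2)
  have hA := (hasSum_expZeta_of_one_lt_re a hs).mul_left E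
  have hB := (hasSum_expZeta_of_one_lt_re (-a) hs).mul_left F
  have hAB := (hA.add hB).div_const 2
  have hterm : ∀ n : ℕ+,
      Complex.cos (π * s / 2 - 2 * n * π * a) / (n : ℂ) ^ s =
      (E * (Complex.exp (2 * π * Complex.I * a * n) / (n : ℂ) ^ s) +
        F * (Complex.exp (2 * π * Complex.I * (-a : ℝ) * n) / (n : ℂ) ^ s)) / 2 := by
    intro n
    rw [Complex.cos]
    have h1 : (π * s / 2 - 2 * n * π * a) * Complex.I =
        (π : ℂ) * Complex.I * s / 2 + 2 * π * Complex.I * (-a : ℝ) * n := by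
      push_cast; ring
    have h2 : (-(π * s / 2 - 2 * n * π * a)) * Complex.I =
        -(π : ℂ) * Complex.I * s / 2 + 2 * π * Complex.I * (a : ℝ) * n := by
      push_cast; ring
    rw [h1, h2, Complex.exp_add, Complex.exp_add]
    field_simp [E, F]
    simp only [E, F]; ring_nf
  have hsum : HasSum (fun n : ℕ+ => Complex.cos (π * s / 2 - 2 * n * π * a) / (n : ℂ) ^ s)
      ((E * expZeta (a : UnitAddCircle) s + F * expZeta ((-a : ℝ) : UnitAddCircle) s) / 2) := by
    have hinj : Function.Injective (fun n : ℕ+ => (n : ℕ)) := fun m n h => PNat.coe_injective h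
    rw [show (fun n : ℕ+ => Complex.cos (π * s / 2 - 2 * n * π * a) / (n : ℂ) ^ s) =
        (fun n : ℕ => (E * (Complex.exp (2 * π * Complex.I * a * n) / (n : ℂ) ^ s) +
          F * (Complex.exp (2 * π * Complex.I * (-a : ℝ) * n) / (n : ℂ) ^ s)) / 2) ∘
          (fun n : ℕ+ => (n : ℕ)) from funext fun n => hterm n]
    apply (Function.Injective.hasSum_iff hinj ?_).2 hAB
    intro n hn
    have hn0 : n = 0 := by
      by_contra h
      exact hn ⟨⟨n, Nat.pos_of_ne_zero h⟩, rfl⟩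
    simp [hn0, Complex.zero_cpow hs0]
  rw [hsum.tsum_eq]
  have hcast : ((2 * π : ℝ) : ℂ) = 2 * (π : ℂ) := by push_cast; ring
  have hne : (2 * (π : ℂ)) ^ s ≠ 0 := by
    rw [Ne, Complex.cpow_eq_zero_iff]
    simp [Real.pi_ne_zero]
  have hco : ((-a : ℝ) : UnitAddCircle) = -((a : ℝ) : UnitAddCircle) := rfl
  rw [hcast, Complex.cpow_neg, hco]
  field_simp
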